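/- arXiv:2011.09806 — 6 statements merged into one kernel-verified Lean document; each statement's English description precedes it below -/
import Mathlib

section
/- Let i, j, k, l be integers with 0 < i < k ≤ j < l, and set r = k − i, c = l − j; assume r < c < k. Let p, q be integers with 0 < q < p ≤ r + 1 and p − q ≤ k − c. Then the following identity holds in ℚ(t): P_{k−q+1}/(P_{k−p+1}·P_{p−q}) = Σ_{s=q+1}^{p−1} [ (P_{k−c}/(P_{p−s}·P_{k−c−p+s})) · (P_{c−q+1}/(P_{s−q}·P_{c−s+1})) · t^{2(p−s)(c+1−s)} ] + (P_{k−c}/(P_{p−q}·P_{k−c−p+q})) · t^{2(p−q)(c+1−q)} + P_{c−q+1}/(P_{p−q}·P_{c−p+1}). -/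
open Polynomial

/-- `hpoly α = 1 + t^2 + ⋯ + t^{2α}` for `α ≥ 0`. -/
noncomputable def hpoly (α : ℤ) : Polynomial ℚ :=
  ∑ m ∈ Finset.range (α.toNat + 1), X ^ (2 * m)

/-- `Ppoly 0 = 1` and `Ppoly α = hpoly 0 ⋯ hpoly (α-1)` for `α > 0`. -/
noncomputable def Ppoly (α : ℤ) : Polynomial ℚ :=
  ∏ m ∈ Finset.range α.toNat, hpoly (m : ℤ)

/-- The image of `hpoly α` in the field of rational functions `ℚ(t)`. -/
noncomputable def hQ (α : ℤ) : RatFunc ℚ :=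
  algebraMap (Polynomial ℚ) (RatFunc ℚ) (hpoly α)

/-- The image of `Ppoly α` in the field of rational functions `ℚ(t)`. -/
noncomputable def PQ (α : ℤ) : RatFunc ℚ :=
  algebraMap (Polynomial ℚ) (RatFunc ℚ) (Ppoly α)

/-- The variable `t` of `ℚ(t)`. -/
noncomputable def tQ : RatFunc ℚ := RatFunc.X

lemma hpoly_ne_zero (α : ℤ) : hpoly α ≠ 0 := by
  intro h
  have := congrArg (Polynomial.eval (1:ℚ)) h
  simp [hpoly, Polynomial.eval_finset_sum] at this
  exact absurd this (by positivity)
lemma Ppoly_ne_zero (α : ℤ) : Ppoly α ≠ 0 :=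
  Finset.prod_ne_zero_iff.2 fun m _ => hpoly_ne_zero m
lemma PQ_ne_zero (α : ℤ) : PQ α ≠ 0 := by
  simpa [PQ] using (map_ne_zero_iff _ (RatFunc.algebraMap_injective ℚ)).2 (Ppoly_ne_zero α)
lemma PQ_zero : PQ 0 = 1 := by simp [PQ, Ppoly]
lemma PQ_succ (n : ℕ) : PQ ((n : ℤ) + 1) = PQ n * hQ n := by
  have : ((n:ℤ)+1).toNat = n + 1 := by omega
  simp only [PQ, hQ, Ppoly, this, Int.toNat_natCast, Finset.prod_range_succ, map_mul]
-- tQ = algebraMap X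
lemma tQ_def : tQ = algebraMap (Polynomial ℚ) (RatFunc ℚ) X :=
  RatFunc.algebraMap_X.symm
lemma hQ_split (a b : ℕ) (h : a < b) :
    hQ b = hQ a + tQ ^ (2 * (a + 1)) * hQ ((b : ℤ) - a - 1) := by
  have h1 : ((b:ℤ)).toNat = b := by omega
  have h2 : ((a:ℤ)).toNat = a := by omega
  have h3 : ((b:ℤ) - a - 1).toNat = b - a - 1 := by omega
  have h4 : b + 1 = (a + 1) + (b - a - 1 + 1) := by omega
  simp only [hQ, hpoly, h1, h2, h3, tQ_def, ← map_pow, ← map_mul, ← map_add]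
  congr 1
  rw [h4, Finset.sum_range_add, Finset.mul_sum]
  congr 1
  apply Finset.sum_congr rfl
  intro x _
  rw [← pow_add]
  ring_nf

noncomputable def gb (n k : ℕ) : RatFunc ℚ :=
  if k ≤ n then PQ n / (PQ k * PQ ((n - k : ℕ) : ℤ)) else 0

lemma gb_zero_right (n : ℕ) : gb n 0 = 1 := by
  simp [gb, PQ_zero, div_self (PQ_ne_zero _)]

lemma gb_self (n : ℕ) : gb n n = 1 := by
  simp [gb, PQ_zero, div_self (PQ_ne_zero _)]

lemma gb_of_lt {n k : ℕ} (h : n < k) : gb n k = 0 := by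
  simp [gb, Nat.not_le.2 h]

lemma gb_pascal (n k : ℕ) :
    gb (n + 1) (k + 1) = gb n k + tQ ^ (2 * (k + 1)) * gb n (k + 1) := by
  rcases lt_or_ge n (k + 1) with h | h
  · rcases Nat.lt_or_ge n k with h2 | h2
    · rw [gb_of_lt (by omega), gb_of_lt h2, gb_of_lt (by omega)]; ring
    · have hnk : n = k := by omega
      subst hnk
      rw [gb_self, gb_self, gb_of_lt (by omega)]; ring
  · -- k + 1 ≤ n
    have e1 : gb (n+1) (k+1) = PQ ((n:ℤ)+1) / (PQ ((k:ℤ)+1) * PQ ((n-k : ℕ) : ℤ)) := by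
      rw [gb, if_pos (by omega : k+1 ≤ n+1), Nat.succ_sub_succ]
      norm_num
    have e2 : gb n k = PQ n / (PQ k * PQ ((n-k : ℕ) : ℤ)) := by
      simp [gb, le_of_lt (by omega : k < n) ]
    have e3 : gb n (k+1) = PQ n / (PQ (k+1) * PQ ((n-k-1 : ℕ) : ℤ)) := by
      have : n - (k+1) = n - k - 1 := by omega
      simp [gb, h, this]
    rw [e1, e2, e3]
    have hP1 : PQ ((n:ℤ)+1) = PQ n * hQ n := PQ_succ n
    have hP2 : PQ ((k:ℤ)+1) = PQ k * hQ k := PQ_succ k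
    have hP3 : PQ ((n-k : ℕ) : ℤ) = PQ ((n-k-1 : ℕ) : ℤ) * hQ ((n-k-1:ℕ)) := by
      have h5 : ((n-k-1:ℕ):ℤ) + 1 = ((n-k:ℕ):ℤ) := by push_cast; omega
      rw [← h5, PQ_succ]
    have hsplit : hQ n = hQ k + tQ ^ (2 * (k + 1)) * hQ ((n-k-1 : ℕ)) := by
      have := hQ_split k n (by omega)
      have h6 : ((n:ℤ) - k - 1) = ((n-k-1:ℕ):ℤ) := by push_cast; omega
      rwa [h6] at this
    rw [hP1, hP2, hP3, hsplit]
    have n1 := PQ_ne_zero (k:ℤ)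
    have n2 := PQ_ne_zero ((n-k-1:ℕ):ℤ)
    have n3 := PQ_ne_zero (n:ℤ)
    have hhk : hQ k ≠ 0 := by
      intro h0
      have : PQ ((k:ℤ)+1) = 0 := by rw [hP2, h0, mul_zero]
      exact PQ_ne_zero _ this
    have hhnk : hQ ((n-k-1:ℕ)) ≠ 0 := by
      intro h0
      have : PQ ((n-k:ℕ):ℤ) = 0 := by rw [hP3, h0, mul_zero]
      exact PQ_ne_zero _ this
    field_simp

lemma gb_zero_left (k : ℕ) : gb 0 (k+1) = 0 := gb_of_lt (by omega)

lemma vand (m n k : ℕ) :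
    gb (m + n) k =
      ∑ j ∈ Finset.range (k + 1),
        gb m j * gb n (k - j) * tQ ^ (2 * ((m - j) * (k - j))) := by
  induction m generalizing k with
  | zero =>
    rw [Finset.sum_eq_single 0]
    · simp [gb_zero_right]
    · intro j _ hj
      obtain ⟨j', rfl⟩ : ∃ j', j = j' + 1 := ⟨j - 1, by omega⟩
      simp [gb_zero_left]
    · intro h; simp at h
  | succ m ih =>
    cases k with
    | zero => simp [gb_zero_right]
    | succ k =>
      have lhs_eq : gb (m + 1 + n) (k + 1)
          = gb (m + n) k + tQ ^ (2 * (k + 1)) * gb (m + n) (k + 1) := by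
        have : m + 1 + n = (m + n) + 1 := by omega
        rw [this, gb_pascal]
      rw [lhs_eq, ih k, ih (k+1)]
      -- RHS: peel j = 0
      rw [Finset.sum_range_succ' (fun j => gb (m+1) j * gb n (k+1-j) * tQ ^ (2 * ((m+1-j) * (k+1-j)))) (k+1)]
      simp only [Nat.succ_sub_succ, Nat.sub_zero, Nat.add_sub_cancel]
      rw [gb_zero_right]
      -- expand gb (m+1) (j+1) via pascal
      have expand : ∀ j ∈ Finset.range (k+1),
          gb (m+1) (j+1) * gb n (k-j) * tQ ^ (2 * ((m-j) * (k-j)))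
          = gb m j * gb n (k-j) * tQ ^ (2 * ((m-j) * (k-j)))
            + tQ ^ (2*(j+1)) * gb m (j+1) * gb n (k-j) * tQ ^ (2 * ((m-j) * (k-j))) := by
        intro j _
        rw [gb_pascal]; ring
      rw [Finset.sum_congr rfl expand, Finset.sum_add_distrib]
      -- remains to match the second pieces
      rw [Finset.mul_sum]
      -- peel j = 0 from the (k+2)-range sum on the left
      rw [Finset.sum_range_succ' (fun j => tQ ^ (2*(k+1)) * (gb m j * gb n (k+1-j) * tQ ^ (2 * ((m-j) * (k+1-j))))) (k+1)]
      simp only [Nat.succ_sub_succ, Nat.sub_zero, gb_zero_right]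
      have term_eq : ∀ j ∈ Finset.range (k+1),
          tQ ^ (2*(k+1)) * (gb m (j+1) * gb n (k-j) * tQ ^ (2 * ((m-(j+1)) * (k-j))))
          = tQ ^ (2*(j+1)) * gb m (j+1) * gb n (k-j) * tQ ^ (2 * ((m-j) * (k-j))) := by
        intro j hj
        rcases le_or_gt (j+1) m with hm | hm
        · obtain ⟨a, ha⟩ : ∃ a, m - j = a + 1 := ⟨m - j - 1, by omega⟩
          have ha2 : m - (j+1) = a := by omega
          obtain ⟨b, hb⟩ : ∃ b, k - j = b ∧ j + b = k := ⟨k - j, rfl, by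
            have := Finset.mem_range.1 hj; omega⟩
          rw [ha, ha2, hb.1, ← hb.2]
          have hpow : tQ^(2*(j+b+1)) * tQ^(2*(a*b)) = tQ^(2*(j+1)) * tQ^(2*((a+1)*b)) := by
            rw [← pow_add, ← pow_add]; congr 1; ring
          linear_combination (gb m (j+1) * gb n b) * hpow
        · rw [gb_of_lt hm]; ring
      rw [Finset.sum_congr rfl term_eq]
      ring


lemma gb_def (n k : ℕ) : gb n k = if k ≤ n then PQ n / (PQ k * PQ ((n - k : ℕ) : ℤ)) else 0 := rfl

lemma gb_int (a b : ℤ) (h0 : 0 ≤ b) (hba : b ≤ a) :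
    gb a.toNat b.toNat = PQ a / (PQ b * PQ (a - b)) := by
  rw [gb_def, if_pos (by omega)]
  have e1 : ((a.toNat : ℕ) : ℤ) = a := by omega
  have e2 : ((b.toNat : ℕ) : ℤ) = b := by omega
  have e3 : ((a.toNat - b.toNat : ℕ) : ℤ) = a - b := by omega
  rw [e1, e2, e3]


/-- The local polynomial identity (Theorem 3.1). -/
theorem local_polynomial_identity
    (i j k l r c p q : ℤ)
    (hi : 0 < i) (hik : i < k) (hkj : k ≤ j) (hjl : j < l)
    (hr : r = k - i) (hc : c = l - j) (hrc : r < c) (hck : c < k)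
    (hq : 0 < q) (hqp : q < p) (hpr : p ≤ r + 1) (hpq : p - q ≤ k - c) :
    PQ (k - q + 1) / (PQ (k - p + 1) * PQ (p - q)) =
      (∑ s ∈ Finset.Icc (q + 1) (p - 1),
        (PQ (k - c) / (PQ (p - s) * PQ (k - c - p + s))) *
          (PQ (c - q + 1) / (PQ (s - q) * PQ (c - s + 1))) *
          tQ ^ (2 * (p - s) * (c + 1 - s)).toNat) +
      PQ (k - c) / (PQ (p - q) * PQ (k - c - p + q)) *
        tQ ^ (2 * (p - q) * (c + 1 - q)).toNat +
      PQ (c - q + 1) / (PQ (p - q) * PQ (c - p + 1)) := by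
  have hpk : p ≤ k := by omega
  have hpc : p ≤ c := by omega
  set m := (c - q + 1).toNat with hm
  set nn := (k - c).toNat with hnn
  set kk := (p - q).toNat with hkk
  obtain ⟨d, hd⟩ : ∃ d, kk = d + 1 := ⟨kk - 1, by omega⟩
  have key := vand m nn kk
  -- LHS
  have hL : gb (m + nn) kk = PQ (k - q + 1) / (PQ (k - p + 1) * PQ (p - q)) := by
    have e1 : m + nn = (k - q + 1).toNat := by omega
    have e2 : kk = (p - q).toNat := rfl
    rw [e1, e2, gb_int (k - q + 1) (p - q) (by omega) (by omega)]
    have : k - q + 1 - (p - q) = k - p + 1 := by ring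
    rw [this, mul_comm]
  -- last term (u = kk)
  have hlast : gb m kk * gb nn (kk - kk) * tQ ^ (2 * ((m - kk) * (kk - kk)))
      = PQ (c - q + 1) / (PQ (p - q) * PQ (c - p + 1)) := by
    have e0 : kk - kk = 0 := by omega
    rw [e0, gb_def nn 0, if_pos (by omega)]
    have : gb m kk = PQ (c - q + 1) / (PQ (p - q) * PQ (c - p + 1)) := by
      have : kk = (p - q).toNat := rfl
      rw [hm, this, gb_int (c - q + 1) (p - q) (by omega) (by omega)]
      have : c - q + 1 - (p - q) = c - p + 1 := by ring
      rw [this]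
    rw [this]
    norm_num [PQ_zero, div_self (PQ_ne_zero ((nn : ℕ) : ℤ))]
  -- first term (u = 0)
  have hfirst : gb m 0 * gb nn (kk - 0) * tQ ^ (2 * ((m - 0) * (kk - 0)))
      = PQ (k - c) / (PQ (p - q) * PQ (k - c - p + q)) *
        tQ ^ (2 * (p - q) * (c + 1 - q)).toNat := by
    have e1 : gb m 0 = 1 := by
      rw [gb_def, if_pos (by omega)]
      norm_num [PQ_zero, div_self (PQ_ne_zero ((m : ℕ) : ℤ))]
    have e2 : gb nn (kk - 0) = PQ (k - c) / (PQ (p - q) * PQ (k - c - p + q)) := by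
      rw [Nat.sub_zero, hnn, hkk, gb_int (k - c) (p - q) (by omega) (by omega)]
      have : k - c - (p - q) = k - c - p + q := by ring
      rw [this]
    have e3 : (2 * ((m - 0) * (kk - 0)) : ℕ) = (2 * (p - q) * (c + 1 - q)).toNat := by
      have h1 : ((m : ℤ)) = c - q + 1 := by omega
      have h2 : ((kk : ℤ)) = p - q := by omega
      simp only [Nat.sub_zero]
      have : ((2 * (m * kk) : ℕ) : ℤ) = 2 * (p - q) * (c + 1 - q) := by
        push_cast
        rw [h1, h2]; ring
      omega
    rw [e1, e2, e3, one_mul]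
  -- middle sum
  have hmid : ∑ u ∈ Finset.range d,
      gb m (u + 1) * gb nn (kk - (u + 1)) * tQ ^ (2 * ((m - (u + 1)) * (kk - (u + 1))))
      = ∑ s ∈ Finset.Icc (q + 1) (p - 1),
        (PQ (k - c) / (PQ (p - s) * PQ (k - c - p + s))) *
          (PQ (c - q + 1) / (PQ (s - q) * PQ (c - s + 1))) *
          tQ ^ (2 * (p - s) * (c + 1 - s)).toNat := by
    refine Finset.sum_nbij' (fun u => q + 1 + (u : ℤ)) (fun s => (s - q - 1).toNat) ?_ ?_ ?_ ?_ ?_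
    · intro u hu
      simp only [Finset.mem_range] at hu
      simp only [Finset.mem_Icc]
      omega
    · intro s hs
      simp only [Finset.mem_Icc] at hs
      simp only [Finset.mem_range]
      omega
    · intro u hu; simp only [Finset.mem_range] at hu; omega
    · intro s hs; simp only [Finset.mem_Icc] at hs; omega
    · intro u hu
      simp only [Finset.mem_range] at hu
      set s : ℤ := q + 1 + (u : ℤ) with hs
      have hsq : q + 1 ≤ s := by omega
      have hsp : s ≤ p - 1 := by omega
      have g1 : gb m (u + 1) = PQ (c - q + 1) / (PQ (s - q) * PQ (c - s + 1)) := by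
        have e : (u + 1 : ℕ) = (s - q).toNat := by omega
        rw [hm, e, gb_int (c - q + 1) (s - q) (by omega) (by omega)]
        have : c - q + 1 - (s - q) = c - s + 1 := by ring
        rw [this]
      have g2 : gb nn (kk - (u + 1)) = PQ (k - c) / (PQ (p - s) * PQ (k - c - p + s)) := by
        have e : (kk - (u + 1) : ℕ) = (p - s).toNat := by omega
        rw [hnn, e, gb_int (k - c) (p - s) (by omega) (by omega)]
        have : k - c - (p - s) = k - c - p + s := by ring
        rw [this]
      have g3 : (2 * ((m - (u + 1)) * (kk - (u + 1))) : ℕ) = (2 * (p - s) * (c + 1 - s)).toNat := by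
        have h1 : ((m - (u + 1) : ℕ) : ℤ) = c + 1 - s := by omega
        have h2 : ((kk - (u + 1) : ℕ) : ℤ) = p - s := by omega
        have : ((2 * ((m - (u + 1)) * (kk - (u + 1))) : ℕ) : ℤ) = 2 * (p - s) * (c + 1 - s) := by
          push_cast [h1, h2]
          ring
        omega
      rw [g1, g2, g3]
      ring
  -- assemble
  rw [← hL, key, hd, Finset.sum_range_succ, Finset.sum_range_succ', ← hd, hmid, hfirst, hlast]
end

section
/- Let i, j, k, l be integers with 0 < i < k ≤ j < l, and set r = k − i, c = l − j; assume r < c < k. For an integer p with 1 ≤ p ≤ r + 1 put i_p := k − p + 1 and define in ℚ(t): H_p := P_j·P_{l−i_p}/(P_{i_p}·P_{j−i_p}·P_{k−i_p}·P_{l−k}), I_p := P_{l−j}·P_{k+j−i_p}/(P_{k−i_p}·P_{l−j−k+i_p}·P_k·P_{j−i_p}), and for integers q < p define f_{pq} := P_{k−c}/(P_{p−q}·P_{k−c−p+q}) if p − q ≤ k − c and f_{pq} := 0 otherwise, and d_{pq} := (p−q)(c+1−q). Then for every p with 2 ≤ p ≤ r + 1 one has I_p = H_p − Σ_{q=1}^{p−1}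 t^{2·d_{pq}} · f_{pq} · I_q in ℚ(t). -/
open Polynomial

lemma hQ_ne_zero (α : ℤ) : hQ α ≠ 0 := by
  simpa [hQ] using (RatFunc.algebraMap_ne_zero (hpoly_ne_zero α))

lemma tQ_ne_zero : tQ ≠ 0 := RatFunc.X_ne_zero

noncomputable def qq : RatFunc ℚ := tQ ^ 2
lemma qq_ne_zero : qq ≠ 0 := pow_ne_zero _ tQ_ne_zero

noncomputable def Qz (e : ℤ) : RatFunc ℚ := qq ^ e
lemma Qz_add (a b : ℤ) : Qz (a + b) = Qz a * Qz b := zpow_add₀ qq_ne_zero a b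
lemma Qz_natCast (m : ℕ) : Qz (m : ℤ) = tQ ^ (2 * m) := by
  rw [Qz, zpow_natCast, qq, ← pow_mul]
lemma Qz_zero : Qz 0 = 1 := rfl
lemma Qz_ne_zero (e : ℤ) : Qz e ≠ 0 := zpow_ne_zero _ qq_ne_zero

lemma hQ_eq_sum (n : ℕ) : hQ (n : ℤ) = ∑ m ∈ Finset.range (n + 1), qq ^ m := by
  simp only [hQ, hpoly, map_sum, map_pow, qq, ← pow_mul]
  norm_num [tQ, RatFunc.algebraMap_X]

noncomputable def Pn (n : ℕ) : RatFunc ℚ := PQ (n : ℤ)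

lemma PQ_eq (z : ℤ) : PQ z = Pn z.toNat := by
  simp only [Pn, PQ, Ppoly, Int.toNat_natCast]

lemma Pn_ne_zero (n : ℕ) : Pn n ≠ 0 := PQ_ne_zero _

lemma Pn_succ (n : ℕ) : Pn (n + 1) = Pn n * hQ (n : ℤ) := by
  simp only [Pn, PQ, Ppoly, hQ]
  rw [Int.toNat_natCast, Int.toNat_natCast, Finset.prod_range_succ, map_mul]

/-- Gaussian binomial as element of `ℚ(t)`. -/
noncomputable def Bq (a b : ℕ) : RatFunc ℚ :=
  if b ≤ a then Pn a / (Pn b * Pn (a - b)) else 0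

lemma Bq_of_le {a b : ℕ} (h : b ≤ a) : Bq a b = Pn a / (Pn b * Pn (a - b)) :=
  if_pos h

lemma Bq_of_lt {a b : ℕ} (h : a < b) : Bq a b = 0 := if_neg (by omega)

lemma Bq_ne_zero {a b : ℕ} (h : b ≤ a) : Bq a b ≠ 0 := by
  rw [Bq_of_le h]
  exact div_ne_zero (Pn_ne_zero _) (mul_ne_zero (Pn_ne_zero _) (Pn_ne_zero _))

lemma Pn_zero : Pn 0 = 1 := by
  simp [Pn, PQ, Ppoly]

lemma Bq_zero (a : ℕ) : Bq a 0 = 1 := by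
  rw [Bq_of_le (Nat.zero_le a), Pn_zero, one_mul, Nat.sub_zero,
    div_self (Pn_ne_zero a)]

lemma Bq_self (a : ℕ) : Bq a a = 1 := by
  rw [Bq_of_le le_rfl, Nat.sub_self, Pn_zero, mul_one, div_self (Pn_ne_zero a)]

lemma Bq_symm {a b : ℕ} (h : b ≤ a) : Bq a b = Bq a (a - b) := by
  rw [Bq_of_le h, Bq_of_le (by omega)]
  have : a - (a - b) = b := by omega
  rw [this, mul_comm]

lemma hq_split {k n : ℕ} (h : k < n) :
    hQ (n : ℤ) = Qz ((n : ℤ) - k) * hQ (k : ℤ) + hQ ((n : ℤ) - k - 1) := by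
  have h1 : (n : ℤ) - k = ((n - k : ℕ) : ℤ) := by omega
  have h2 : (n : ℤ) - k - 1 = ((n - k - 1 : ℕ) : ℤ) := by omega
  rw [h2, h1, Qz_natCast, hQ_eq_sum, hQ_eq_sum, hQ_eq_sum]
  have h3 : n + 1 = (n - k - 1 + 1) + (k + 1) := by omega
  rw [h3, Finset.sum_range_add, add_comm]
  congr 1
  rw [Finset.mul_sum]
  apply Finset.sum_congr rfl
  intro m _
  rw [show tQ ^ (2 * (n - k)) = qq ^ (n - k) by rw [qq, ← pow_mul], ← pow_add]
  congr 1
  omega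

lemma pascal (n k : ℕ) :
    Bq (n + 1) (k + 1) = Qz ((n : ℤ) - k) * Bq n k + Bq n (k + 1) := by
  rcases lt_or_ge k n with hkn | hkn
  · have e1 : Bq (n+1) (k+1) = Pn (n+1) / (Pn (k+1) * Pn (n - k)) := by
      rw [Bq_of_le (by omega : k + 1 ≤ n + 1)]
      have : n + 1 - (k + 1) = n - k := by omega
      rw [this]
    have e2 : Bq n k = Pn n / (Pn k * Pn (n - k)) := Bq_of_le (by omega)
    have e3 : Bq n (k+1) = Pn n / (Pn (k+1) * Pn (n - k - 1)) := by
      rw [Bq_of_le (by omega : k + 1 ≤ n)]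
      have : n - (k + 1) = n - k - 1 := by omega
      rw [this]
    rw [e1, e2, e3, Pn_succ n, Pn_succ k]
    have e4 : Pn (n - k) = Pn (n - k - 1) * hQ ((n : ℤ) - k - 1) := by
      have : n - k = (n - k - 1) + 1 := by omega
      rw [this, Pn_succ]
      congr 2
      omega
    obtain ⟨A, hA⟩ : ∃ A, hQ ((n : ℤ) - k - 1) = A := ⟨_, rfl⟩
    rw [hA] at e4
    have hs := hq_split hkn
    rw [hA] at hs
    rw [e4, hs]
    have h1 := Pn_ne_zero k
    have h2 := Pn_ne_zero (n - k - 1)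
    have h3 := hQ_ne_zero (k : ℤ)
    have h4 : A ≠ 0 := by rw [← hA]; exact hQ_ne_zero _
    field_simp
  · rcases eq_or_lt_of_le hkn with heq | hlt
    · subst heq
      rw [Bq_self, Bq_self, Bq_of_lt (by omega), sub_self, Qz_zero]
      ring
    · rw [Bq_of_lt (by omega), Bq_of_lt (by omega), Bq_of_lt (by omega)]
      ring

lemma tri {a b u : ℕ} (h : u ≤ b) :
    Bq a b * Bq b u = Bq a u * Bq (a - u) (b - u) := by
  rcases le_or_gt b a with hba | hba
  · have e1 := Bq_of_le hba
    have e2 := Bq_of_le h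
    have e3 := Bq_of_le (le_trans h hba)
    have e4 := Bq_of_le (by omega : b - u ≤ a - u)
    rw [e1, e2, e3, e4]
    have h5 : a - u - (b - u) = a - b := by omega
    rw [h5]
    have := Pn_ne_zero a; have := Pn_ne_zero b; have := Pn_ne_zero u
    have := Pn_ne_zero (a - b); have := Pn_ne_zero (b - u)
    have := Pn_ne_zero (a - u)
    field_simp
  · rw [Bq_of_lt hba]
    rcases le_or_gt u a with hua | hua
    · rw [Bq_of_lt (by omega : a - u < b - u)]
      ring
    · rw [Bq_of_lt hua]
      ring

lemma swap (j x y : ℕ) :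
    Bq j x * Bq (j - x) y = Bq j y * Bq (j - y) x := by
  rcases le_or_gt (x + y) j with hxy | hxy
  · have h1 : Bq j (x + y) * Bq (x + y) x = Bq j x * Bq (j - x) ((x+y) - x) :=
      tri (by omega)
    have h2 : Bq j (x + y) * Bq (x + y) y = Bq j y * Bq (j - y) ((x+y) - y) :=
      tri (by omega)
    have h3 : (x + y) - x = y := by omega
    have h4 : (x + y) - y = x := by omega
    rw [h3] at h1; rw [h4] at h2
    have h5 : Bq (x + y) x = Bq (x + y) y := by
      rw [Bq_symm (by omega : x ≤ x + y), h3]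
    rw [h5] at h1
    rw [← h1, ← h2]
  · have z1 : Bq j x * Bq (j - x) y = 0 := by
      rcases le_or_gt x j with hx | hx
      · rw [Bq_of_lt (by omega : j - x < y)]; ring
      · rw [Bq_of_lt hx]; ring
    have z2 : Bq j y * Bq (j - y) x = 0 := by
      rcases le_or_gt y j with hy | hy
      · rw [Bq_of_lt (by omega : j - y < x)]; ring
      · rw [Bq_of_lt hy]; ring
    rw [z1, z2]

lemma Qz_congr {a b : ℤ} (h : a = b) : Qz a = Qz b := congrArg Qz h

lemma vandermonde (m : ℕ) : ∀ n k : ℕ,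
    Bq (m + n) k =
      ∑ s ∈ Finset.range (k + 1),
        Qz ((s : ℤ) * ((m : ℤ) - (k : ℤ) + (s : ℤ))) * Bq n s * Bq m (k - s) := by
  intro n
  induction n with
  | zero =>
    intro k
    rw [Finset.sum_eq_single 0]
    · simp [Bq_self, Qz_zero]
    · intro s hs hs0
      rw [Bq_of_lt (by omega : 0 < s)]
      ring
    · intro h
      exact absurd (Finset.mem_range.2 (by omega)) h
  | succ n IH =>
    intro k
    rcases k with _ | K
    · rw [Finset.sum_range_one]
      simp [Bq_zero, Qz_zero]
    · have pas := pascal (m + n) K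
      rw [show m + (n + 1) = (m + n) + 1 from by omega, pas]
      rw [Finset.sum_range_succ']
      have hterm : ∀ i ∈ Finset.range (K + 1),
          Qz (((i+1 : ℕ) : ℤ) * ((m : ℤ) - ((K+1 : ℕ) : ℤ) + ((i+1 : ℕ) : ℤ))) *
              Bq (n + 1) (i + 1) * Bq m (K + 1 - (i + 1)) =
            Qz ((m : ℤ) + (n : ℤ) - (K : ℤ)) *
                (Qz ((i : ℤ) * ((m : ℤ) - (K : ℤ) + (i : ℤ))) * Bq n i * Bq m (K - i)) +
              Qz (((i+1 : ℕ) : ℤ) * ((m : ℤ) - ((K+1 : ℕ) : ℤ) + ((i+1 : ℕ) : ℤ))) *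
                Bq n (i + 1) * Bq m ((K + 1) - (i + 1)) := by
        intro i _
        rw [pascal n i, show K + 1 - (i + 1) = K - i from by omega]
        have hqz : Qz (((i+1 : ℕ) : ℤ) * ((m : ℤ) - ((K+1 : ℕ) : ℤ) + ((i+1 : ℕ) : ℤ))) *
            Qz ((n : ℤ) - (i : ℤ)) =
            Qz ((m : ℤ) + (n : ℤ) - (K : ℤ)) *
              Qz ((i : ℤ) * ((m : ℤ) - (K : ℤ) + (i : ℤ))) := by
          rw [← Qz_add, ← Qz_add]
          exact Qz_congr (by push_cast; ring)
        linear_combination (Bq n i * Bq m (K - i)) * hqz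
      rw [Finset.sum_congr rfl hterm, Finset.sum_add_distrib, ← Finset.mul_sum, ← IH K]
      have hsum2 : ∑ i ∈ Finset.range (K + 1),
          Qz (((i+1 : ℕ) : ℤ) * ((m : ℤ) - ((K+1 : ℕ) : ℤ) + ((i+1 : ℕ) : ℤ))) *
            Bq n (i + 1) * Bq m ((K + 1) - (i + 1)) =
          Bq (m + n) (K + 1) - Bq m (K + 1) := by
        have h := IH (K + 1)
        rw [Finset.sum_range_succ'] at h
        simp only [Nat.cast_zero, zero_mul, Qz_zero, one_mul, Bq_zero,
          Nat.sub_zero, mul_one] at h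
        linear_combination -h
      rw [hsum2]
      simp only [Nat.sub_zero, Nat.cast_zero, zero_mul, Qz_zero, one_mul, Bq_zero]
      have hc : ((m + n : ℕ) : ℤ) - (K : ℤ) = (m : ℤ) + (n : ℤ) - (K : ℤ) := by
        push_cast; ring
      rw [hc]
      ring

lemma innerSumB (k c n u : ℕ) (hun : u ≤ n) (hnc : n ≤ c) (hck : c ≤ k) :
    ∑ s ∈ Finset.range (n + 1),
        Qz ((s : ℤ) * ((c : ℤ) - (n : ℤ) + (s : ℤ))) * Bq (k - c) s * Bq c (n - s) *
          Bq (n - s) u =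
      Bq c u * Bq (k - u) (n - u) := by
  have h1 : ∑ s ∈ Finset.range (n + 1),
      Qz ((s : ℤ) * ((c : ℤ) - (n : ℤ) + (s : ℤ))) * Bq (k - c) s * Bq c (n - s) *
        Bq (n - s) u =
      ∑ s ∈ Finset.range (n - u + 1),
      Qz ((s : ℤ) * ((c : ℤ) - (n : ℤ) + (s : ℤ))) * Bq (k - c) s * Bq c (n - s) *
        Bq (n - s) u := by
    symm
    apply Finset.sum_subset
    · intro s hs
      simp only [Finset.mem_range] at hs ⊢
      omega
    · intro s hs hns
      simp only [Finset.mem_range] at hs hns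
      rw [Bq_of_lt (by omega : n - s < u)]
      ring
  rw [h1]
  have h2 : ∀ s ∈ Finset.range (n - u + 1),
      Qz ((s : ℤ) * ((c : ℤ) - (n : ℤ) + (s : ℤ))) * Bq (k - c) s * Bq c (n - s) *
        Bq (n - s) u =
      Bq c u * (Qz ((s : ℤ) * (((c - u : ℕ) : ℤ) - ((n - u : ℕ) : ℤ) + (s : ℤ))) *
        Bq (k - c) s * Bq (c - u) ((n - u) - s)) := by
    intro s hs
    simp only [Finset.mem_range] at hs
    have ht : Bq c (n - s) * Bq (n - s) u = Bq c u * Bq (c - u) ((n - s) - u) :=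
      tri (by omega)
    rw [show (n - s) - u = (n - u) - s from by omega] at ht
    have hqz : Qz ((s : ℤ) * ((c : ℤ) - (n : ℤ) + (s : ℤ))) =
        Qz ((s : ℤ) * (((c - u : ℕ) : ℤ) - ((n - u : ℕ) : ℤ) + (s : ℤ))) :=
      Qz_congr (by
        have e1 : ((c - u : ℕ) : ℤ) = (c : ℤ) - u := by omega
        have e2 : ((n - u : ℕ) : ℤ) = (n : ℤ) - u := by omega
        rw [e1, e2]; ring)
    rw [hqz]
    linear_combination Qz ((s : ℤ) * (((c - u : ℕ) : ℤ) - ((n - u : ℕ) : ℤ) + (s : ℤ))) *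
      Bq (k - c) s * ht
  rw [Finset.sum_congr rfl h2, ← Finset.mul_sum, ← vandermonde (c - u) (k - c) (n - u)]
  rw [show (c - u) + (k - c) = k - u from by omega]

lemma mainId (j k c n : ℕ) (hnk : n ≤ k) (hkj : k ≤ j) (hnc : n ≤ c) (hck : c ≤ k) :
    Bq j (k - n) * Bq (j + c - k + n) n =
      ∑ s ∈ Finset.range (n + 1),
        Qz ((s : ℤ) * ((c : ℤ) - (n : ℤ) + (s : ℤ))) * Bq (k - c) s * Bq c (n - s) *
          Bq (j + n - s) k := by
  have stepA : ∀ s ∈ Finset.range (n + 1),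
      Qz ((s : ℤ) * ((c : ℤ) - (n : ℤ) + (s : ℤ))) * Bq (k - c) s * Bq c (n - s) *
          Bq (j + n - s) k =
      ∑ u ∈ Finset.range (k + 1),
        Qz ((s : ℤ) * ((c : ℤ) - (n : ℤ) + (s : ℤ))) * Bq (k - c) s * Bq c (n - s) *
          (Qz ((u : ℤ) * ((j : ℤ) - (k : ℤ) + (u : ℤ))) * Bq (n - s) u * Bq j (k - u)) := by
    intro s hs
    simp only [Finset.mem_range] at hs
    rw [show j + n - s = j + (n - s) from by omega, vandermonde j (n - s) k,
      Finset.mul_sum]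
  rw [Finset.sum_congr rfl stepA, Finset.sum_comm]
  have stepB : ∑ u ∈ Finset.range (k + 1), ∑ s ∈ Finset.range (n + 1),
      Qz ((s : ℤ) * ((c : ℤ) - (n : ℤ) + (s : ℤ))) * Bq (k - c) s * Bq c (n - s) *
        (Qz ((u : ℤ) * ((j : ℤ) - (k : ℤ) + (u : ℤ))) * Bq (n - s) u * Bq j (k - u)) =
      ∑ u ∈ Finset.range (n + 1), ∑ s ∈ Finset.range (n + 1),
      Qz ((s : ℤ) * ((c : ℤ) - (n : ℤ) + (s : ℤ))) * Bq (k - c) s * Bq c (n - s) *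
        (Qz ((u : ℤ) * ((j : ℤ) - (k : ℤ) + (u : ℤ))) * Bq (n - s) u * Bq j (k - u)) := by
    symm
    apply Finset.sum_subset
    · intro u hu
      simp only [Finset.mem_range] at hu ⊢
      omega
    · intro u hu hun
      simp only [Finset.mem_range] at hu hun
      apply Finset.sum_eq_zero
      intro s hs
      simp only [Finset.mem_range] at hs
      rw [Bq_of_lt (by omega : n - s < u)]
      ring
  rw [stepB]
  have stepC : ∀ u ∈ Finset.range (n + 1), ∑ s ∈ Finset.range (n + 1),
      Qz ((s : ℤ) * ((c : ℤ) - (n : ℤ) + (s : ℤ))) * Bq (k - c) s * Bq c (n - s) *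
        (Qz ((u : ℤ) * ((j : ℤ) - (k : ℤ) + (u : ℤ))) * Bq (n - s) u * Bq j (k - u)) =
      Bq j (k - n) *
        (Qz ((u : ℤ) * (((j - (k - n) : ℕ) : ℤ) - (n : ℤ) + (u : ℤ))) * Bq c u *
          Bq (j - (k - n)) (n - u)) := by
    intro u hu
    simp only [Finset.mem_range] at hu
    have e1 : ∀ s ∈ Finset.range (n + 1),
        Qz ((s : ℤ) * ((c : ℤ) - (n : ℤ) + (s : ℤ))) * Bq (k - c) s * Bq c (n - s) *
          (Qz ((u : ℤ) * ((j : ℤ) - (k : ℤ) + (u : ℤ))) * Bq (n - s) u * Bq j (k - u)) =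
        (Qz ((u : ℤ) * ((j : ℤ) - (k : ℤ) + (u : ℤ))) * Bq j (k - u)) *
          (Qz ((s : ℤ) * ((c : ℤ) - (n : ℤ) + (s : ℤ))) * Bq (k - c) s * Bq c (n - s) *
            Bq (n - s) u) := by
      intro s _
      ring
    rw [Finset.sum_congr rfl e1, ← Finset.mul_sum,
      innerSumB k c n u (by omega) hnc hck]
    -- now : (Qz(u(j-k+u)) * Bq j (k-u)) * (Bq c u * Bq (k-u) (n-u)) = RHS
    have t1 : Bq j (k - u) * Bq (k - u) (n - u) =
        Bq j (n - u) * Bq (j - (n - u)) (k - n) := by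
      have := tri (a := j) (b := k - u) (u := n - u) (by omega)
      rw [show (k - u) - (n - u) = k - n from by omega] at this
      exact this
    have t2 : Bq j (n - u) * Bq (j - (n - u)) (k - n) =
        Bq j (k - n) * Bq (j - (k - n)) (n - u) := swap j (n - u) (k - n)
    have hqz : Qz ((u : ℤ) * ((j : ℤ) - (k : ℤ) + (u : ℤ))) =
        Qz ((u : ℤ) * (((j - (k - n) : ℕ) : ℤ) - (n : ℤ) + (u : ℤ))) :=
      Qz_congr (by
        have e2 : ((j - (k - n) : ℕ) : ℤ) = (j : ℤ) - k + n := by omega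
        rw [e2]; ring)
    calc (Qz ((u : ℤ) * ((j : ℤ) - (k : ℤ) + (u : ℤ))) * Bq j (k - u)) *
          (Bq c u * Bq (k - u) (n - u))
        = Qz ((u : ℤ) * ((j : ℤ) - (k : ℤ) + (u : ℤ))) * Bq c u *
            (Bq j (k - u) * Bq (k - u) (n - u)) := by ring
      _ = Qz ((u : ℤ) * ((j : ℤ) - (k : ℤ) + (u : ℤ))) * Bq c u *
            (Bq j (k - n) * Bq (j - (k - n)) (n - u)) := by rw [t1, t2]
      _ = Bq j (k - n) *
            (Qz ((u : ℤ) * (((j - (k - n) : ℕ) : ℤ) - (n : ℤ) + (u : ℤ))) * Bq c u *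
              Bq (j - (k - n)) (n - u)) := by rw [hqz]; ring
  rw [Finset.sum_congr rfl stepC, ← Finset.mul_sum,
    ← vandermonde (j - (k - n)) c n]
  rw [show (j - (k - n)) + c = j + c - k + n from by omega]

lemma PQ_eq' (z : ℤ) (a : ℕ) (h : z.toNat = a) : PQ z = Pn a := by
  rw [PQ_eq, h]


/-- `H_p`: the Poincaré polynomial of the resolution of the stratum `Δ_p`,
with `i_p = k - p + 1`. -/
noncomputable def Hpol (j k l p : ℤ) : RatFunc ℚ :=
  PQ j * PQ (l - (k - p + 1)) /
    (PQ (k - p + 1) * PQ (j - (k - p + 1)) * PQ (k - (k - p + 1)) * PQ (l - k))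

/-- `I_p`: the intersection cohomology Poincaré polynomial of `Δ_p`,
with `i_p = k - p + 1`. -/
noncomputable def Ipol (j k l p : ℤ) : RatFunc ℚ :=
  PQ (l - j) * PQ (k + j - (k - p + 1)) /
    (PQ (k - (k - p + 1)) * PQ (l - j - k + (k - p + 1)) * PQ k *
      PQ (j - (k - p + 1)))

/-- `f_{pq}`. -/
noncomputable def fpol (k c p q : ℤ) : RatFunc ℚ :=
  if p - q ≤ k - c then PQ (k - c) / (PQ (p - q) * PQ (k - c - p + q)) else 0

/-- The inductive recursion computing the `I_p` from the `H_p` (Corollary 4.3). -/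
theorem intersection_cohomology_recursion
    (i j k l r c : ℤ)
    (hi : 0 < i) (hik : i < k) (hkj : k ≤ j) (hjl : j < l)
    (hr : r = k - i) (hc : c = l - j) (hrc : r < c) (hck : c < k) :
    ∀ p : ℤ, 2 ≤ p → p ≤ r + 1 →
      Ipol j k l p =
        Hpol j k l p -
          ∑ q ∈ Finset.Icc 1 (p - 1),
            tQ ^ (2 * ((p - q) * (c + 1 - q))).toNat * fpol k c p q *
              Ipol j k l q := by
  intro p hp2 hpr
  obtain ⟨n, hn⟩ : ∃ n : ℕ, p = (n : ℤ) + 1 := ⟨(p - 1).toNat, by omega⟩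
  obtain ⟨J, hJ⟩ : ∃ J : ℕ, j = (J : ℤ) := ⟨j.toNat, by omega⟩
  obtain ⟨K, hK⟩ : ∃ K : ℕ, k = (K : ℤ) := ⟨k.toNat, by omega⟩
  obtain ⟨C, hC⟩ : ∃ C : ℕ, c = (C : ℤ) := ⟨c.toNat, by omega⟩
  have hl : l = (J : ℤ) + (C : ℤ) := by omega
  have hn1 : 1 ≤ n := by omega
  have hnK : n ≤ K := by omega
  have hnC : n ≤ C := by omega
  have hCK : C ≤ K := by omega
  have hKJ : K ≤ J := by omega
  -- Hpol in terms of Bq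
  have hH : Hpol j k l p = Bq J (K - n) * Bq (J + C - K + n) n := by
    rw [Hpol, Bq_of_le (by omega : K - n ≤ J), Bq_of_le (by omega : n ≤ J + C - K + n)]
    rw [PQ_eq' j J (by omega), PQ_eq' (l - (k - p + 1)) (J + C - K + n) (by omega),
      PQ_eq' (k - p + 1) (K - n) (by omega),
      PQ_eq' (j - (k - p + 1)) (J - (K - n)) (by omega),
      PQ_eq' (k - (k - p + 1)) n (by omega),
      PQ_eq' (l - k) (J + C - K + n - n) (by omega)]
    have h1 := Pn_ne_zero (K - n); have h2 := Pn_ne_zero (J - (K - n))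
    have h3 := Pn_ne_zero n; have h4 := Pn_ne_zero (J + C - K + n - n)
    field_simp
  -- Ipol in terms of Bq
  have hI : ∀ m : ℕ, m ≤ n → Ipol j k l ((m : ℤ) + 1) = Bq C m * Bq (J + m) K := by
    intro m hm
    rw [Ipol, Bq_of_le (by omega : m ≤ C), Bq_of_le (by omega : K ≤ J + m)]
    rw [PQ_eq' (l - j) C (by omega),
      PQ_eq' (k + j - (k - ((m : ℤ) + 1) + 1)) (J + m) (by omega),
      PQ_eq' (k - (k - ((m : ℤ) + 1) + 1)) m (by omega),
      PQ_eq' (l - j - k + (k - ((m : ℤ) + 1) + 1)) (C - m) (by omega),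
      PQ_eq' k K (by omega),
      PQ_eq' (j - (k - ((m : ℤ) + 1) + 1)) (J + m - K) (by omega)]
    have h1 := Pn_ne_zero m; have h2 := Pn_ne_zero (C - m)
    have h3 := Pn_ne_zero K; have h4 := Pn_ne_zero (J + m - K)
    rw [div_mul_div_comm]
    ring_nf
  -- fpol in terms of Bq
  have hf : ∀ s : ℕ, 1 ≤ s → s ≤ n → fpol k c p (p - (s : ℤ)) = Bq (K - C) s := by
    intro s hs1 hsn
    rw [fpol]
    rcases le_or_gt s (K - C) with hle | hlt
    · rw [if_pos (by omega), Bq_of_le hle,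
        PQ_eq' (k - c) (K - C) (by omega),
        PQ_eq' (p - (p - (s : ℤ))) s (by omega),
        PQ_eq' (k - c - p + (p - (s : ℤ))) (K - C - s) (by omega)]
    · rw [if_neg (by omega), Bq_of_lt hlt]
  -- the main combinatorial identity, splitting off the s = 0 term
  have main := mainId J K C n hnK hKJ hnC hCK
  have hins : Finset.range (n + 1) = insert 0 (Finset.Icc 1 n) := by
    ext x
    simp only [Finset.mem_range, Finset.mem_insert, Finset.mem_Icc]
    omega
  rw [hins, Finset.sum_insert (by simp)] at main
  simp only [Nat.cast_zero, zero_mul, Qz_zero, one_mul, Bq_zero, Nat.sub_zero,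
    mul_one] at main
  -- identify the theorem's sum with the Icc 1 n sum
  have hsum : ∑ q ∈ Finset.Icc 1 (p - 1),
      tQ ^ (2 * ((p - q) * (c + 1 - q))).toNat * fpol k c p q * Ipol j k l q =
      ∑ s ∈ Finset.Icc 1 n,
        Qz ((s : ℤ) * ((C : ℤ) - (n : ℤ) + (s : ℤ))) * Bq (K - C) s * Bq C (n - s) *
          Bq (J + n - s) K := by
    apply Finset.sum_nbij' (i := fun (q : ℤ) => (p - q).toNat)
      (j := fun (s : ℕ) => p - (s : ℤ))
    · intro a ha; simp only [Finset.mem_Icc] at ha ⊢; omega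
    · intro a ha; simp only [Finset.mem_Icc] at ha ⊢; omega
    · intro a ha; simp only [Finset.mem_Icc] at ha; omega
    · intro a ha; simp only [Finset.mem_Icc] at ha; omega
    · intro q hq
      simp only [Finset.mem_Icc] at hq
      set s : ℕ := (p - q).toNat with hsdef
      have hq' : q = p - (s : ℤ) := by omega
      have hs1 : 1 ≤ s := by omega
      have hsn : s ≤ n := by omega
      rw [hq', hf s hs1 hsn]
      have e1 : ((C - n + s : ℕ) : ℤ) = (C : ℤ) - (n : ℤ) + (s : ℤ) := by omega
      have hexp : (2 * ((p - (p - (s : ℤ))) * (c + 1 - (p - (s : ℤ))))).toNat =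
          2 * (s * (C - n + s)) := by
        have f1 : p - (p - (s : ℤ)) = (s : ℤ) := by omega
        have f2 : c + 1 - (p - (s : ℤ)) = ((C - n + s : ℕ) : ℤ) := by omega
        rw [f1, f2, ← Nat.cast_mul]
        omega
      rw [hexp, ← Qz_natCast, Qz_congr (by rw [Nat.cast_mul, e1] :
        ((s * (C - n + s) : ℕ) : ℤ) = (s : ℤ) * ((C : ℤ) - (n : ℤ) + (s : ℤ)))]
      rw [show p - (s : ℤ) = ((n - s : ℕ) : ℤ) + 1 from by omega,
        hI (n - s) (by omega)]
      rw [show J + n - s = J + (n - s) from by omega]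
      ring
  have hIp : Ipol j k l p = Bq C n * Bq (J + n) K := by
    rw [hn]; exact hI n le_rfl
  rw [hsum, hH]
  linear_combination hIp - main
end

section
/- Let i, j, c be integers with 2 ≤ c ≤ i and j ≥ i + 2. Then the following identity holds in ℚ(t): P_j·P_{j+c−i}/(P_i·P_{j−i}·P_2·P_{j+c−i−2}) = P_c·P_{j+2}/(P_2·P_{c−2}·P_{i+2}·P_{j−i}) + t^{2(c−1)}·P_{i−c+2}·P_c·P_{j+1}/(P_{i−c+1}·P_{c−1}·P_{i+2}·P_{j−i−1}) + t^{4c}·P_{i−c+2}·P_j/(P_2·P_{i−c}·P_{i+2}·P_{j−i−2}). -/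
open Polynomial

noncomputable def hN (m : ℕ) : RatFunc ℚ := hQ m
noncomputable def PN (m : ℕ) : RatFunc ℚ := PQ m

lemma hN_ne (m : ℕ) : hN m ≠ 0 :=
  RatFunc.algebraMap_ne_zero (hpoly_ne_zero _)

lemma PN_ne (m : ℕ) : PN m ≠ 0 :=
  RatFunc.algebraMap_ne_zero (Finset.prod_ne_zero_iff.2 fun _ _ => hpoly_ne_zero _)

lemma PN_succ (m : ℕ) : PN (m + 1) = PN m * hN m := by
  unfold PN PQ Ppoly hN hQ
  rw [← map_mul]
  congr 1
  rw [Int.toNat_natCast, Int.toNat_natCast, Finset.prod_range_succ]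

lemma hN_mul (m : ℕ) : hN m * (tQ ^ 2 - 1) = tQ ^ (2 * m + 2) - 1 := by
  unfold hN hQ tQ
  rw [← RatFunc.algebraMap_X (K := ℚ), ← map_pow, ← map_one (algebraMap (Polynomial ℚ) (RatFunc ℚ)),
    ← map_sub, ← map_mul, ← map_pow, ← map_sub]
  congr 1
  have : hpoly (m : ℤ) = ∑ k ∈ Finset.range (m + 1), (X ^ 2 : Polynomial ℚ) ^ k := by
    simp [hpoly, pow_mul]
  rw [this, geom_sum_mul, ← pow_mul]
  ring_nf

lemma hN_zero : hN 0 = 1 := by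
  unfold hN hQ
  rw [show hpoly ((0:ℕ):ℤ) = 1 by simp [hpoly], map_one]

lemma PN_two : PN 2 = hN 1 := by
  rw [show (2:ℕ) = 0+1+1 from rfl, PN_succ, PN_succ, hN_zero,
    show PN 0 = 1 by unfold PN PQ Ppoly; simp]
  ring

lemma tQ_sq_ne : (tQ ^ 2 - 1 : RatFunc ℚ) ≠ 0 := by
  unfold tQ
  rw [← RatFunc.algebraMap_X (K := ℚ), ← map_pow, ← map_one (algebraMap (Polynomial ℚ) (RatFunc ℚ)),
    ← map_sub]
  exact RatFunc.algebraMap_ne_zero (fun h => by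
    have := congrArg (fun p => Polynomial.coeff p 2) h
    simp [Polynomial.coeff_one] at this)

set_option maxHeartbeats 1600000 in
lemma key_identity (a b d : ℕ) :
    hN (a+d+2) * hN (a+d+3) * (hN (a+b+2) * hN (a+b+3)) =
      hN a * hN (a+1) * (hN (a+b+d+4) * hN (a+b+d+5)) +
      tQ ^ (2*a+2) * hN (b+1) * hN (a+1) * hN (a+b+d+4) * hN 1 * hN (d+1) +
      tQ ^ (4*a+8) * (hN b * hN (b+1)) * (hN d * hN (d+1)) := by
  have hs := tQ_sq_ne
  have H : (hN (a+d+2) * (tQ^2-1)) * (hN (a+d+3) * (tQ^2-1)) *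
        ((hN (a+b+2) * (tQ^2-1)) * (hN (a+b+3) * (tQ^2-1))) * (tQ^2-1) =
      (hN a * (tQ^2-1)) * (hN (a+1) * (tQ^2-1)) *
          ((hN (a+b+d+4) * (tQ^2-1)) * (hN (a+b+d+5) * (tQ^2-1))) * (tQ^2-1) +
        tQ ^ (2*a+2) * (hN (b+1) * (tQ^2-1)) * (hN (a+1) * (tQ^2-1)) *
          (hN (a+b+d+4) * (tQ^2-1)) * (hN 1 * (tQ^2-1)) * (hN (d+1) * (tQ^2-1)) +
        tQ ^ (4*a+8) * ((hN b * (tQ^2-1)) * (hN (b+1) * (tQ^2-1))) *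
          ((hN d * (tQ^2-1)) * (hN (d+1) * (tQ^2-1))) * (tQ^2-1) := by
    simp only [hN_mul]
    ring
  have h5 : ((tQ:RatFunc ℚ)^2-1)^5 ≠ 0 := pow_ne_zero 5 hs
  apply mul_right_cancel₀ h5
  linear_combination H

set_option maxHeartbeats 3200000 in
lemma main_nat (a b d : ℕ) :
    PN (a+b+d+4) * PN (a+d+4) / (PN (a+b+2) * PN (d+2) * PN 2 * PN (a+d+2)) =
      PN (a+2) * PN (a+b+d+6) / (PN 2 * PN a * PN (a+b+4) * PN (d+2)) +
      tQ ^ (2*a+2) * PN (b+2) * PN (a+2) * PN (a+b+d+5) /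
        (PN (b+1) * PN (a+1) * PN (a+b+4) * PN (d+1)) +
      tQ ^ (4*a+8) * PN (b+2) * PN (a+b+d+4) /
        (PN 2 * PN b * PN (a+b+4) * PN d) := by
  set C : RatFunc ℚ := PN (a+b+d+4) /
      (PN (a+b+2) * hN (a+b+2) * hN (a+b+3) * (PN d * hN d * hN (d+1)) * hN 1) with hC
  have E1 : PN (a+d+4) = PN (a+d+2) * hN (a+d+2) * hN (a+d+3) := by
    rw [show a+d+4 = a+d+2+1+1 from rfl, PN_succ, PN_succ]
  have E2 : PN (a+2) = PN a * hN a * hN (a+1) := by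
    rw [show a+2 = a+1+1 from rfl, PN_succ, PN_succ]
  have E3 : PN (a+b+d+6) = PN (a+b+d+4) * hN (a+b+d+4) * hN (a+b+d+5) := by
    rw [show a+b+d+6 = a+b+d+4+1+1 from rfl, PN_succ, PN_succ]
  have E4 : PN (a+b+4) = PN (a+b+2) * hN (a+b+2) * hN (a+b+3) := by
    rw [show a+b+4 = a+b+2+1+1 from rfl, PN_succ, PN_succ]
  have E5 : PN (b+2) = PN b * hN b * hN (b+1) := by
    rw [show b+2 = b+1+1 from rfl, PN_succ, PN_succ]
  have E6 : PN (a+b+d+5) = PN (a+b+d+4) * hN (a+b+d+4) := by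
    rw [show a+b+d+5 = a+b+d+4+1 from rfl, PN_succ]
  have E7 : PN (b+1) = PN b * hN b := PN_succ b
  have E8 : PN (a+1) = PN a * hN a := PN_succ a
  have E9 : PN (d+1) = PN d * hN d := PN_succ d
  have E10 : PN (d+2) = PN d * hN d * hN (d+1) := by
    rw [show d+2 = d+1+1 from rfl, PN_succ, PN_succ]
  have eq0 : PN (a+b+d+4) * PN (a+d+4) / (PN (a+b+2) * PN (d+2) * PN 2 * PN (a+d+2)) =
      C * (hN (a+d+2) * hN (a+d+3) * (hN (a+b+2) * hN (a+b+3))) := by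
    rw [hC, div_eq_iff (by apply_rules [mul_ne_zero, PN_ne, hN_ne]),
      div_mul_eq_mul_div, div_mul_eq_mul_div,
      eq_div_iff (by apply_rules [mul_ne_zero, PN_ne, hN_ne])]
    simp only [E1, E10, PN_two]
    ring
  have eq1 : PN (a+2) * PN (a+b+d+6) / (PN 2 * PN a * PN (a+b+4) * PN (d+2)) =
      C * (hN a * hN (a+1) * (hN (a+b+d+4) * hN (a+b+d+5))) := by
    rw [hC, div_eq_iff (by apply_rules [mul_ne_zero, PN_ne, hN_ne]),
      div_mul_eq_mul_div, div_mul_eq_mul_div,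
      eq_div_iff (by apply_rules [mul_ne_zero, PN_ne, hN_ne])]
    simp only [E2, E3, E4, E10, PN_two]
    ring
  have eq2 : tQ ^ (2*a+2) * PN (b+2) * PN (a+2) * PN (a+b+d+5) /
        (PN (b+1) * PN (a+1) * PN (a+b+4) * PN (d+1)) =
      C * (tQ ^ (2*a+2) * hN (b+1) * hN (a+1) * hN (a+b+d+4) * hN 1 * hN (d+1)) := by
    rw [hC, div_eq_iff (by apply_rules [mul_ne_zero, PN_ne, hN_ne]),
      div_mul_eq_mul_div, div_mul_eq_mul_div,
      eq_div_iff (by apply_rules [mul_ne_zero, PN_ne, hN_ne])]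
    simp only [E5, E2, E6, E7, E8, E4, E9]
    ring
  have eq3 : tQ ^ (4*a+8) * PN (b+2) * PN (a+b+d+4) / (PN 2 * PN b * PN (a+b+4) * PN d) =
      C * (tQ ^ (4*a+8) * (hN b * hN (b+1)) * (hN d * hN (d+1))) := by
    rw [hC, div_eq_iff (by apply_rules [mul_ne_zero, PN_ne, hN_ne]),
      div_mul_eq_mul_div, div_mul_eq_mul_div,
      eq_div_iff (by apply_rules [mul_ne_zero, PN_ne, hN_ne])]
    simp only [E5, E4, PN_two]
    ring
  rw [eq0, eq1, eq2, eq3, key_identity a b d, mul_add, mul_add]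

lemma PQ_coe (x : ℤ) (n : ℕ) (h : x = n) : PQ x = PN n := by rw [h]; rfl

/-- Identity (5.3) of the Appendix: the global identity in the case
`k = i + 2`, `l = j + c`, i.e. `2 = k - i ≤ k - c`. -/
theorem global_identity_case_k_sub_i_eq_two
    (i j c : ℤ) (hc : 2 ≤ c) (hci : c ≤ i) (hj : j ≥ i + 2) :
    PQ j * PQ (j + c - i) / (PQ i * PQ (j - i) * PQ 2 * PQ (j + c - i - 2)) =
      PQ c * PQ (j + 2) / (PQ 2 * PQ (c - 2) * PQ (i + 2) * PQ (j - i)) +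
      tQ ^ (2 * (c - 1)).toNat * PQ (i - c + 2) * PQ c * PQ (j + 1) /
        (PQ (i - c + 1) * PQ (c - 1) * PQ (i + 2) * PQ (j - i - 1)) +
      tQ ^ (4 * c).toNat * PQ (i - c + 2) * PQ j /
        (PQ 2 * PQ (i - c) * PQ (i + 2) * PQ (j - i - 2)) := by
  obtain ⟨a, rfl⟩ : ∃ a : ℕ, c = (a : ℤ) + 2 := ⟨(c - 2).toNat, by omega⟩
  obtain ⟨b, rfl⟩ : ∃ b : ℕ, i = (a : ℤ) + b + 2 := ⟨(i - a - 2).toNat, by omega⟩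
  obtain ⟨d, rfl⟩ : ∃ d : ℕ, j = (a : ℤ) + b + d + 4 := ⟨(j - a - b - 4).toNat, by omega⟩
  rw [PQ_coe ((a:ℤ)+b+d+4) (a+b+d+4) (by push_cast; ring),
    PQ_coe ((a:ℤ)+b+d+4 + ((a:ℤ)+2) - ((a:ℤ)+b+2)) (a+d+4) (by push_cast; ring),
    PQ_coe ((a:ℤ)+b+2) (a+b+2) (by push_cast; ring),
    PQ_coe ((a:ℤ)+b+d+4 - ((a:ℤ)+b+2)) (d+2) (by push_cast; ring),
    PQ_coe 2 2 (by norm_num),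
    PQ_coe ((a:ℤ)+b+d+4 + ((a:ℤ)+2) - ((a:ℤ)+b+2) - 2) (a+d+2) (by push_cast; ring),
    PQ_coe ((a:ℤ)+2) (a+2) (by push_cast; ring),
    PQ_coe ((a:ℤ)+b+d+4 + 2) (a+b+d+6) (by push_cast; ring),
    PQ_coe ((a:ℤ)+2-2) a (by push_cast; ring),
    PQ_coe ((a:ℤ)+b+2 + 2) (a+b+4) (by push_cast; ring),
    PQ_coe ((a:ℤ)+b+2 - ((a:ℤ)+2) + 2) (b+2) (by push_cast; ring),
    PQ_coe ((a:ℤ)+b+d+4 + 1) (a+b+d+5) (by push_cast; ring),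
    PQ_coe ((a:ℤ)+b+2 - ((a:ℤ)+2) + 1) (b+1) (by push_cast; ring),
    PQ_coe ((a:ℤ)+2-1) (a+1) (by push_cast; ring),
    PQ_coe ((a:ℤ)+b+d+4 - ((a:ℤ)+b+2) - 1) (d+1) (by push_cast; ring),
    PQ_coe ((a:ℤ)+b+2 - ((a:ℤ)+2)) b (by push_cast; ring),
    PQ_coe ((a:ℤ)+b+d+4 - ((a:ℤ)+b+2) - 2) d (by push_cast; ring),
    show (2 * ((a:ℤ)+2-1)).toNat = 2*a+2 by omega,
    show (4 * ((a:ℤ)+2)).toNat = 4*a+8 by omega]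
  exact main_nat a b d
end

section
/- For integers i, j, c with 2 ≤ c ≤ i and j ≥ i + 2, define F(i,j,c) ∈ ℚ(t) by F(i,j,c) := h_{j+c−i−2}·h_{j+c−i−1}·h_i·h_{i+1}/(h_j·h_{j+1}·h_{c−2}·h_{c−1}) − t^{2(c−1)}·h_1·h_{i−c+1}·h_{j−i−1}/(h_{j+1}·h_{c−2}) − t^{4c}·h_{i−c}·h_{i−c+1}·h_{j−i−2}·h_{j−i−1}/(h_{c−2}·h_{c−1}·h_j·h_{j+1}). Then for all integers i, j, c with 4 ≤ c ≤ i and j ≥ i + 2 one has F(i,j,c) = F(i,j,c−1). -/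
open Polynomial

/-- `F(i,j,c)`: the reduced form of identity (5.3) of the Appendix. -/
noncomputable def Ffun (i j c : ℤ) : RatFunc ℚ :=
  hQ (j + c - i - 2) * hQ (j + c - i - 1) * hQ i * hQ (i + 1) /
      (hQ j * hQ (j + 1) * hQ (c - 2) * hQ (c - 1)) -
    tQ ^ (2 * (c - 1)).toNat * hQ 1 * hQ (i - c + 1) * hQ (j - i - 1) /
      (hQ (j + 1) * hQ (c - 2)) -
    tQ ^ (4 * c).toNat * hQ (i - c) * hQ (i - c + 1) * hQ (j - i - 2) *
        hQ (j - i - 1) /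
      (hQ (c - 2) * hQ (c - 1) * hQ j * hQ (j + 1))

/-- `tQ ^ n - 1 ≠ 0` for `n ≠ 0`. -/
lemma tpow_ne (n : ℕ) (hn : n ≠ 0) : (tQ : RatFunc ℚ) ^ n - 1 ≠ 0 := by
  have hX : (X : ℚ[X]) ^ n - 1 ≠ 0 := by
    simpa using X_pow_sub_C_ne_zero (Nat.pos_of_ne_zero hn) (1 : ℚ)
  have h0 := RatFunc.algebraMap_ne_zero hX
  simpa only [map_sub, map_pow, map_one, RatFunc.algebraMap_X, tQ] using h0

/-- `hQ` as an explicit quotient. -/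
lemma hQ_eq (α : ℤ) :
    hQ α = ((tQ ^ 2) ^ (α.toNat + 1) - 1) / (tQ ^ 2 - 1) := by
  have h2 : (tQ ^ 2 - 1 : RatFunc ℚ) ≠ 0 := tpow_ne 2 two_ne_zero
  rw [eq_div_iff h2]
  have hp : hpoly α * ((X : ℚ[X]) ^ 2 - 1) = ((X : ℚ[X]) ^ 2) ^ (α.toNat + 1) - 1 := by
    simpa only [hpoly, pow_mul] using geom_sum_mul ((X : ℚ[X]) ^ 2) (α.toNat + 1)
  have h3 := congrArg (algebraMap ℚ[X] (RatFunc ℚ)) hp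
  simpa only [map_mul, map_sub, map_pow, map_one, RatFunc.algebraMap_X, hQ, tQ] using h3

set_option maxHeartbeats 2000000 in
/-- The abstract identity over an arbitrary field. -/
lemma key_identity_s7 {K : Type*} [Field K] (q A B D : K)
    (h1 : q - 1 ≠ 0)
    (h2 : A*B*D*q^6 - 1 ≠ 0) (h3 : A*B*D*q^7 - 1 ≠ 0)
    (h4 : D*q - 1 ≠ 0) (h5 : D*q^2 - 1 ≠ 0) (h6 : D*q^3 - 1 ≠ 0) :
    (B*D*q^4 - 1)/(q-1) * ((B*D*q^5 - 1)/(q-1)) * ((A*D*q^4-1)/(q-1)) * ((A*D*q^5-1)/(q-1)) /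
      ((A*B*D*q^6-1)/(q-1) * ((A*B*D*q^7-1)/(q-1)) * ((D*q^2-1)/(q-1)) * ((D*q^3-1)/(q-1)))
    - D*q^2 * ((q^2-1)/(q-1)) * ((A*q^2-1)/(q-1)) * ((B*q^2-1)/(q-1)) /
      ((A*B*D*q^7-1)/(q-1) * ((D*q^2-1)/(q-1)))
    - D^2*q^6 * ((A*q-1)/(q-1)) * ((A*q^2-1)/(q-1)) * ((B*q-1)/(q-1)) * ((B*q^2-1)/(q-1)) /
      ((D*q^2-1)/(q-1) * ((D*q^3-1)/(q-1)) * ((A*B*D*q^6-1)/(q-1)) * ((A*B*D*q^7-1)/(q-1)))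
    =
    (B*D*q^3 - 1)/(q-1) * ((B*D*q^4 - 1)/(q-1)) * ((A*D*q^4-1)/(q-1)) * ((A*D*q^5-1)/(q-1)) /
      ((A*B*D*q^6-1)/(q-1) * ((A*B*D*q^7-1)/(q-1)) * ((D*q-1)/(q-1)) * ((D*q^2-1)/(q-1)))
    - D*q * ((q^2-1)/(q-1)) * ((A*q^3-1)/(q-1)) * ((B*q^2-1)/(q-1)) /
      ((A*B*D*q^7-1)/(q-1) * ((D*q-1)/(q-1)))
    - D^2*q^4 * ((A*q^2-1)/(q-1)) * ((A*q^3-1)/(q-1)) * ((B*q-1)/(q-1)) * ((B*q^2-1)/(q-1)) /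
      ((D*q-1)/(q-1) * ((D*q^2-1)/(q-1)) * ((A*B*D*q^6-1)/(q-1)) * ((A*B*D*q^7-1)/(q-1))) := by
  have hE : (q-1) * (A*B*D*q^6-1) * (A*B*D*q^7-1) * (D*q-1) * (D*q^2-1) * (D*q^3-1) ≠ 0 := by
    apply_rules [mul_ne_zero]
  have e1 : (B*D*q^4 - 1)/(q-1) * ((B*D*q^5 - 1)/(q-1)) * ((A*D*q^4-1)/(q-1)) * ((A*D*q^5-1)/(q-1)) /
      ((A*B*D*q^6-1)/(q-1) * ((A*B*D*q^7-1)/(q-1)) * ((D*q^2-1)/(q-1)) * ((D*q^3-1)/(q-1)))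
      = (q-1) * (D*q-1) * ((B*D*q^4 - 1) * (B*D*q^5 - 1) * (A*D*q^4-1) * (A*D*q^5-1)) /
      ((q-1) * (A*B*D*q^6-1) * (A*B*D*q^7-1) * (D*q-1) * (D*q^2-1) * (D*q^3-1)) := by
    rw [div_eq_div_iff (by apply_rules [mul_ne_zero, div_ne_zero]) hE]
    field_simp
  have e2 : D*q^2 * ((q^2-1)/(q-1)) * ((A*q^2-1)/(q-1)) * ((B*q^2-1)/(q-1)) /
      ((A*B*D*q^7-1)/(q-1) * ((D*q^2-1)/(q-1)))
      = (A*B*D*q^6-1) * (D*q-1) * (D*q^3-1) * (D*q^2 * (q^2-1) * (A*q^2-1) * (B*q^2-1)) /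
      ((q-1) * (A*B*D*q^6-1) * (A*B*D*q^7-1) * (D*q-1) * (D*q^2-1) * (D*q^3-1)) := by
    rw [div_eq_div_iff (by apply_rules [mul_ne_zero, div_ne_zero]) hE]
    field_simp
  have e3 : D^2*q^6 * ((A*q-1)/(q-1)) * ((A*q^2-1)/(q-1)) * ((B*q-1)/(q-1)) * ((B*q^2-1)/(q-1)) /
      ((D*q^2-1)/(q-1) * ((D*q^3-1)/(q-1)) * ((A*B*D*q^6-1)/(q-1)) * ((A*B*D*q^7-1)/(q-1)))
      = (q-1) * (D*q-1) * (D^2*q^6 * (A*q-1) * (A*q^2-1) * (B*q-1) * (B*q^2-1)) /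
      ((q-1) * (A*B*D*q^6-1) * (A*B*D*q^7-1) * (D*q-1) * (D*q^2-1) * (D*q^3-1)) := by
    rw [div_eq_div_iff (by apply_rules [mul_ne_zero, div_ne_zero]) hE]
    field_simp
  have e4 : (B*D*q^3 - 1)/(q-1) * ((B*D*q^4 - 1)/(q-1)) * ((A*D*q^4-1)/(q-1)) * ((A*D*q^5-1)/(q-1)) /
      ((A*B*D*q^6-1)/(q-1) * ((A*B*D*q^7-1)/(q-1)) * ((D*q-1)/(q-1)) * ((D*q^2-1)/(q-1)))
      = (q-1) * (D*q^3-1) * ((B*D*q^3 - 1) * (B*D*q^4 - 1) * (A*D*q^4-1) * (A*D*q^5-1)) /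
      ((q-1) * (A*B*D*q^6-1) * (A*B*D*q^7-1) * (D*q-1) * (D*q^2-1) * (D*q^3-1)) := by
    rw [div_eq_div_iff (by apply_rules [mul_ne_zero, div_ne_zero]) hE]
    field_simp
  have e5 : D*q * ((q^2-1)/(q-1)) * ((A*q^3-1)/(q-1)) * ((B*q^2-1)/(q-1)) /
      ((A*B*D*q^7-1)/(q-1) * ((D*q-1)/(q-1)))
      = (A*B*D*q^6-1) * (D*q^2-1) * (D*q^3-1) * (D*q * (q^2-1) * (A*q^3-1) * (B*q^2-1)) /
      ((q-1) * (A*B*D*q^6-1) * (A*B*D*q^7-1) * (D*q-1) * (D*q^2-1) * (D*q^3-1)) := by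
    rw [div_eq_div_iff (by apply_rules [mul_ne_zero, div_ne_zero]) hE]
    field_simp
  have e6 : D^2*q^4 * ((A*q^2-1)/(q-1)) * ((A*q^3-1)/(q-1)) * ((B*q-1)/(q-1)) * ((B*q^2-1)/(q-1)) /
      ((D*q-1)/(q-1) * ((D*q^2-1)/(q-1)) * ((A*B*D*q^6-1)/(q-1)) * ((A*B*D*q^7-1)/(q-1)))
      = (q-1) * (D*q^3-1) * (D^2*q^4 * (A*q^2-1) * (A*q^3-1) * (B*q-1) * (B*q^2-1)) /
      ((q-1) * (A*B*D*q^6-1) * (A*B*D*q^7-1) * (D*q-1) * (D*q^2-1) * (D*q^3-1)) := by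
    rw [div_eq_div_iff (by apply_rules [mul_ne_zero, div_ne_zero]) hE]
    field_simp
  rw [e1, e2, e3, e4, e5, e6, div_sub_div_same, div_sub_div_same, div_sub_div_same,
    div_sub_div_same]
  congr 1
  ring

set_option maxHeartbeats 1000000 in
/-- The inductive step in `c`: `F(i,j,c) = F(i,j,c-1)`. -/
theorem Ffun_inductive_step (i j c : ℤ) (hc : 4 ≤ c) (hci : c ≤ i)
    (hj : j ≥ i + 2) :
    Ffun i j c = Ffun i j (c - 1) := by
  set q : RatFunc ℚ := tQ ^ 2 with hq
  -- monomial rewrites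
  have r1 : q ^ ((j + c - i - 2).toNat + 1)
      = q ^ (j - i - 2).toNat * q ^ (c - 3).toNat * q ^ 4 := by
    rw [hq]; simp only [← pow_mul, ← pow_add]; congr 1; omega
  have r2 : q ^ ((j + c - i - 1).toNat + 1)
      = q ^ (j - i - 2).toNat * q ^ (c - 3).toNat * q ^ 5 := by
    rw [hq]; simp only [← pow_mul, ← pow_add]; congr 1; omega
  have r3 : q ^ (i.toNat + 1)
      = q ^ (i - c).toNat * q ^ (c - 3).toNat * q ^ 4 := by
    rw [hq]; simp only [← pow_mul, ← pow_add]; congr 1; omega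
  have r4 : q ^ ((i + 1).toNat + 1)
      = q ^ (i - c).toNat * q ^ (c - 3).toNat * q ^ 5 := by
    rw [hq]; simp only [← pow_mul, ← pow_add]; congr 1; omega
  have r5 : q ^ (j.toNat + 1)
      = q ^ (i - c).toNat * q ^ (j - i - 2).toNat * q ^ (c - 3).toNat * q ^ 6 := by
    rw [hq]; simp only [← pow_mul, ← pow_add]; congr 1; omega
  have r6 : q ^ ((j + 1).toNat + 1)
      = q ^ (i - c).toNat * q ^ (j - i - 2).toNat * q ^ (c - 3).toNat * q ^ 7 := by
    rw [hq]; simp only [← pow_mul, ← pow_add]; congr 1; omega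
  have r7 : q ^ ((c - 2).toNat + 1) = q ^ (c - 3).toNat * q ^ 2 := by
    rw [hq]; simp only [← pow_mul, ← pow_add]; congr 1; omega
  have r8 : q ^ ((c - 1).toNat + 1) = q ^ (c - 3).toNat * q ^ 3 := by
    rw [hq]; simp only [← pow_mul, ← pow_add]; congr 1; omega
  have r9 : q ^ ((1 : ℤ).toNat + 1) = q ^ 2 := by
    norm_num
  have r10 : q ^ ((i - c + 1).toNat + 1) = q ^ (i - c).toNat * q ^ 2 := by
    rw [hq]; simp only [← pow_mul, ← pow_add]; congr 1; omega
  have r11 : q ^ ((j - i - 1).toNat + 1) = q ^ (j - i - 2).toNat * q ^ 2 := by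
    rw [hq]; simp only [← pow_mul, ← pow_add]; congr 1; omega
  have r12 : q ^ ((i - c).toNat + 1) = q ^ (i - c).toNat * q := by
    rw [hq]; simp only [← pow_mul, ← pow_add, pow_one]; congr 1
  have r13 : q ^ ((j - i - 2).toNat + 1) = q ^ (j - i - 2).toNat * q := by
    rw [hq]; simp only [← pow_mul, ← pow_add, pow_one]; congr 1
  have r14 : q ^ ((j + (c - 1) - i - 2).toNat + 1)
      = q ^ (j - i - 2).toNat * q ^ (c - 3).toNat * q ^ 3 := by
    rw [hq]; simp only [← pow_mul, ← pow_add]; congr 1; omega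
  have r15 : q ^ ((j + (c - 1) - i - 1).toNat + 1)
      = q ^ (j - i - 2).toNat * q ^ (c - 3).toNat * q ^ 4 := by
    rw [hq]; simp only [← pow_mul, ← pow_add]; congr 1; omega
  have r16 : q ^ ((c - 1 - 2).toNat + 1) = q ^ (c - 3).toNat * q := by
    rw [hq]; simp only [← pow_mul, ← pow_add, pow_one]; congr 1; omega
  have r17 : q ^ ((c - 1 - 1).toNat + 1) = q ^ (c - 3).toNat * q ^ 2 := by
    rw [hq]; simp only [← pow_mul, ← pow_add]; congr 1; omega
  have r18 : q ^ ((i - (c - 1) + 1).toNat + 1) = q ^ (i - c).toNat * q ^ 3 := by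
    rw [hq]; simp only [← pow_mul, ← pow_add]; congr 1; omega
  have r19 : q ^ ((i - (c - 1)).toNat + 1) = q ^ (i - c).toNat * q ^ 2 := by
    rw [hq]; simp only [← pow_mul, ← pow_add]; congr 1; omega
  have T1 : (tQ : RatFunc ℚ) ^ (2 * (c - 1)).toNat = q ^ (c - 3).toNat * q ^ 2 := by
    rw [hq]; simp only [← pow_mul, ← pow_add]; congr 1; omega
  have T2 : (tQ : RatFunc ℚ) ^ (4 * c).toNat = (q ^ (c - 3).toNat) ^ 2 * q ^ 6 := by
    rw [hq]; simp only [← pow_mul, ← pow_add]; congr 1; omega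
  have T3 : (tQ : RatFunc ℚ) ^ (2 * (c - 1 - 1)).toNat = q ^ (c - 3).toNat * q := by
    rw [hq]; simp only [← pow_mul, ← pow_add, pow_one]; congr 1; omega
  have T4 : (tQ : RatFunc ℚ) ^ (4 * (c - 1)).toNat = (q ^ (c - 3).toNat) ^ 2 * q ^ 4 := by
    rw [hq]; simp only [← pow_mul, ← pow_add]; congr 1; omega
  -- nonvanishing hypotheses
  have tq_pow : ∀ n : ℕ, n ≠ 0 → ∀ m : ℕ, 2 * m = n →
      ∀ x : RatFunc ℚ, x = q ^ m → x - 1 ≠ 0 := by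
    intro n hn m hm x hx
    rw [hx, hq, ← pow_mul, hm]
    exact tpow_ne n hn
  have H1 : q - 1 ≠ 0 := by rw [hq]; exact tpow_ne 2 two_ne_zero
  have H2 : q ^ (i - c).toNat * q ^ (j - i - 2).toNat * q ^ (c - 3).toNat * q ^ 6 - 1 ≠ 0 := by
    rw [← r5]; rw [hq, ← pow_mul]; exact tpow_ne _ (by omega)
  have H3 : q ^ (i - c).toNat * q ^ (j - i - 2).toNat * q ^ (c - 3).toNat * q ^ 7 - 1 ≠ 0 := by
    rw [← r6]; rw [hq, ← pow_mul]; exact tpow_ne _ (by omega)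
  have H4 : q ^ (c - 3).toNat * q - 1 ≠ 0 := by
    rw [← r16]; rw [hq, ← pow_mul]; exact tpow_ne _ (by omega)
  have H5 : q ^ (c - 3).toNat * q ^ 2 - 1 ≠ 0 := by
    rw [← r7]; rw [hq, ← pow_mul]; exact tpow_ne _ (by omega)
  have H6 : q ^ (c - 3).toNat * q ^ 3 - 1 ≠ 0 := by
    rw [← r8]; rw [hq, ← pow_mul]; exact tpow_ne _ (by omega)
  simp only [Ffun, hQ_eq, ← hq]
  rw [r1, r2, r3, r4, r5, r6, r7, r8, r9, r10, r11, r12, r13, r14, r15, r16, r17, r18,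
    r19, T1, T2, T3, T4]
  exact key_identity_s7 q (q ^ (i - c).toNat) (q ^ (j - i - 2).toNat) (q ^ (c - 3).toNat)
    H1 H2 H3 H4 H5 H6
end

section
/- Let i, j, c be integers with 4 ≤ c ≤ i and j ≥ i + 2. Define the polynomials Q_0 := h_{j+c−i−2}·h_{j+c−i−1}·h_i·h_{i+1}·h_{c−3} − h_{j+c−i−3}·h_{j+c−i−2}·h_i·h_{i+1}·h_{c−1}, Q_1 := −t^{2(c−1)}·h_1·h_{i−c+1}·h_{j−i−1}·h_j·h_{c−1}·h_{c−3} + t^{2(c−2)}·h_1·h_{i−c+2}·h_{j−i−1}·h_j·h_{c−1}·h_{c−2}, and Q_2 := −t^{4c}·h_{i−c}·h_{i−c+1}·h_{j−i−2}·h_{j−i−1}·h_{c−3} + t^{4(c−1)}·h_{i−c+1}·h_{i−c+2}·h_{j−i−2}·h_{j−i−1}·h_{c−1}. Then Q_0 + Q_1 + Q_2 = 0 in ℚ[t]. -/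
open Polynomial

lemma hpoly_key (n : ℕ) : ((X:ℚ[X])^2 - 1) * hpoly (n:ℤ) = X^(2*n+2) - 1 := by
  have h1 : hpoly (n : ℤ) = ∑ m ∈ Finset.range (n+1), ((X:ℚ[X])^2)^m := by
    simp [hpoly, pow_mul]
  rw [h1, mul_comm, geom_sum_mul, ← pow_mul]
  ring_nf

lemma Xsq_ne : (RatFunc.X : RatFunc ℚ)^2 - 1 ≠ 0 := by
  have h0 : ((X:ℚ[X])^2 - 1) ≠ 0 := by
    simpa using X_pow_sub_C_ne_zero (R := ℚ) (by norm_num : 0 < 2) 1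
  simpa [map_sub, map_pow, map_one] using
    (IsFractionRing.injective (Polynomial ℚ) (RatFunc ℚ)).ne_iff.mpr h0

lemma hQ_key (n : ℕ) :
    algebraMap (Polynomial ℚ) (RatFunc ℚ) (hpoly (n:ℤ))
      = (RatFunc.X ^ (2*n+2) - 1) / (RatFunc.X^2 - 1) := by
  rw [eq_div_iff Xsq_ne]
  have := congrArg (algebraMap (Polynomial ℚ) (RatFunc ℚ)) (hpoly_key n)
  simp only [map_mul, map_sub, map_pow, map_one, RatFunc.algebraMap_X] at this
  linear_combination this

lemma hpoly_one : hpoly 1 = 1 + (X:ℚ[X])^2 := by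
  simp [hpoly, Finset.sum_range_succ]

set_option maxHeartbeats 2000000 in

/-- `Q₀ + Q₁ + Q₂ = 0`: the cleared-denominator form of the inductive step
`F(i,j,c) - F(i,j,c-1) = 0` in the Appendix. -/
theorem Q_sum_eq_zero (i j c : ℤ) (hc : 4 ≤ c) (hci : c ≤ i) (hj : j ≥ i + 2) :
    (hpoly (j + c - i - 2) * hpoly (j + c - i - 1) * hpoly i * hpoly (i + 1) *
        hpoly (c - 3) -
      hpoly (j + c - i - 3) * hpoly (j + c - i - 2) * hpoly i * hpoly (i + 1) *
        hpoly (c - 1)) +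
    (-(X : Polynomial ℚ) ^ (2 * (c - 1)).toNat * hpoly 1 * hpoly (i - c + 1) *
        hpoly (j - i - 1) * hpoly j * hpoly (c - 1) * hpoly (c - 3) +
      X ^ (2 * (c - 2)).toNat * hpoly 1 * hpoly (i - c + 2) * hpoly (j - i - 1) *
        hpoly j * hpoly (c - 1) * hpoly (c - 2)) +
    (-(X : Polynomial ℚ) ^ (4 * c).toNat * hpoly (i - c) * hpoly (i - c + 1) *
        hpoly (j - i - 2) * hpoly (j - i - 1) * hpoly (c - 3) +
      X ^ (4 * (c - 1)).toNat * hpoly (i - c + 1) * hpoly (i - c + 2) *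
        hpoly (j - i - 2) * hpoly (j - i - 1) * hpoly (c - 1)) = 0 := by
  obtain ⟨a, ha⟩ : ∃ a : ℕ, i - c = (a:ℤ) := ⟨(i - c).toNat, by omega⟩
  obtain ⟨b, hb⟩ : ∃ b : ℕ, j - i - 2 = (b:ℤ) := ⟨(j - i - 2).toNat, by omega⟩
  obtain ⟨d, hd⟩ : ∃ d : ℕ, c - 4 = (d:ℤ) := ⟨(c - 4).toNat, by omega⟩
  rw [show (2 * (c - 1)).toNat = 2*d+6 by omega,
      show (2 * (c - 2)).toNat = 2*d+4 by omega,
      show (4 * c).toNat = 4*d+16 by omega,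
      show (4 * (c - 1)).toNat = 4*d+12 by omega,
      show j + c - i - 1 = ((b+d+5:ℕ):ℤ) by omega,
      show j + c - i - 2 = ((b+d+4:ℕ):ℤ) by omega,
      show j + c - i - 3 = ((b+d+3:ℕ):ℤ) by omega,
      show i + 1 = ((a+d+5:ℕ):ℤ) by omega,
      show i - c + 1 = ((a+1:ℕ):ℤ) by omega,
      show i - c + 2 = ((a+2:ℕ):ℤ) by omega,
      show i - c = ((a:ℕ):ℤ) by omega,
      show j - i - 1 = ((b+1:ℕ):ℤ) by omega,
      show j - i - 2 = ((b:ℕ):ℤ) by omega,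
      show c - 1 = ((d+3:ℕ):ℤ) by omega,
      show c - 2 = ((d+2:ℕ):ℤ) by omega,
      show c - 3 = ((d+1:ℕ):ℤ) by omega,
      show j = ((a+b+d+6:ℕ):ℤ) by omega,
      show i = ((a+d+4:ℕ):ℤ) by omega, hpoly_one]
  apply IsFractionRing.injective (Polynomial ℚ) (RatFunc ℚ)
  simp only [map_add, map_sub, map_mul, map_neg, map_pow, map_zero, map_one,
    RatFunc.algebraMap_X, hQ_key]
  ring
end

section
/- Let i, j be integers with i ≥ 4 and j ≥ i + 2. Define the polynomials G_0 := h_i·h_{j−i+2}·(h_{i+1}·h_{j−i+1} − h_{i−1}·h_{j−i+3}), G_1 := −t^4·h_j·h_1·h_2·(h_{i−2}·h_{j−i−1} − h_{i−3}·h_{j−i}), and G_2 := −t^{12}·h_{j−i−1}·h_{i−3}·(h_{j−i−2}·h_{i−2} − h_{j−i}·h_{i−4}). Then G_0 + G_1 + G_2 = 0 in ℚ[t]. -/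
open Polynomial

lemma keypoly (α : ℤ) :
    hpoly α * ((X : Polynomial ℚ) ^ 2 - 1) = X ^ (2 * α.toNat + 2) - 1 := by
  unfold hpoly
  have h3 : ∀ m : ℕ, (X : Polynomial ℚ) ^ (2 * m) = ((X : Polynomial ℚ) ^ 2) ^ m :=
    fun m => by rw [pow_mul]
  simp only [h3]
  rw [geom_sum_mul, ← pow_mul]
  ring_nf

set_option maxHeartbeats 4000000 in
/-- `G₀ + G₁ + G₂ = 0`: the cleared-denominator form of the inductive step
`F(i,j,3) - F(i-1,j,3) = 0` in the Appendix. -/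
theorem G_sum_eq_zero (i j : ℤ) (hi : 4 ≤ i) (hj : j ≥ i + 2) :
    hpoly i * hpoly (j - i + 2) *
        (hpoly (i + 1) * hpoly (j - i + 1) - hpoly (i - 1) * hpoly (j - i + 3)) +
      (-(X : Polynomial ℚ) ^ 4 * hpoly j * hpoly 1 * hpoly 2 *
        (hpoly (i - 2) * hpoly (j - i - 1) - hpoly (i - 3) * hpoly (j - i))) +
      (-(X : Polynomial ℚ) ^ 12 * hpoly (j - i - 1) * hpoly (i - 3) *
        (hpoly (j - i - 2) * hpoly (i - 2) - hpoly (j - i) * hpoly (i - 4))) =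
      0 := by
  set p := (i - 4).toNat with hp
  set q := (j - i - 2).toNat with hq
  have e1 : i.toNat = p + 4 := by omega
  have e2 : (j - i + 2).toNat = q + 4 := by omega
  have e3 : (i + 1).toNat = p + 5 := by omega
  have e4 : (j - i + 1).toNat = q + 3 := by omega
  have e5 : (i - 1).toNat = p + 3 := by omega
  have e6 : (j - i + 3).toNat = q + 5 := by omega
  have e7 : j.toNat = p + q + 6 := by omega
  have e10 : (i - 2).toNat = p + 2 := by omega
  have e11 : (j - i - 1).toNat = q + 1 := by omega
  have e12 : (i - 3).toNat = p + 1 := by omega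
  have e13 : (j - i).toNat = q + 2 := by omega
  have hdp : ((X : Polynomial ℚ) ^ 2 - 1) ≠ 0 := by
    intro hh
    have := congrArg (Polynomial.eval 2) hh
    norm_num at this
  have hd5 : (((X : Polynomial ℚ) ^ 2 - 1)) ^ 5 ≠ 0 := pow_ne_zero _ hdp
  refine (mul_eq_zero.mp ?_).resolve_right hd5
  have grouped :
      (hpoly i * ((X : Polynomial ℚ) ^ 2 - 1)) * (hpoly (j - i + 2) * ((X : Polynomial ℚ) ^ 2 - 1)) *
          ((hpoly (i + 1) * ((X : Polynomial ℚ) ^ 2 - 1)) * (hpoly (j - i + 1) * ((X : Polynomial ℚ) ^ 2 - 1)) -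
            (hpoly (i - 1) * ((X : Polynomial ℚ) ^ 2 - 1)) * (hpoly (j - i + 3) * ((X : Polynomial ℚ) ^ 2 - 1))) *
          ((X : Polynomial ℚ) ^ 2 - 1) +
        (-(X : Polynomial ℚ) ^ 4) * (hpoly j * ((X : Polynomial ℚ) ^ 2 - 1)) *
            (hpoly 1 * ((X : Polynomial ℚ) ^ 2 - 1)) * (hpoly 2 * ((X : Polynomial ℚ) ^ 2 - 1)) *
          ((hpoly (i - 2) * ((X : Polynomial ℚ) ^ 2 - 1)) * (hpoly (j - i - 1) * ((X : Polynomial ℚ) ^ 2 - 1)) -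
            (hpoly (i - 3) * ((X : Polynomial ℚ) ^ 2 - 1)) * (hpoly (j - i) * ((X : Polynomial ℚ) ^ 2 - 1))) +
        (-(X : Polynomial ℚ) ^ 12) * (hpoly (j - i - 1) * ((X : Polynomial ℚ) ^ 2 - 1)) *
            (hpoly (i - 3) * ((X : Polynomial ℚ) ^ 2 - 1)) *
          ((hpoly (j - i - 2) * ((X : Polynomial ℚ) ^ 2 - 1)) * (hpoly (i - 2) * ((X : Polynomial ℚ) ^ 2 - 1)) -
            (hpoly (j - i) * ((X : Polynomial ℚ) ^ 2 - 1)) * (hpoly (i - 4) * ((X : Polynomial ℚ) ^ 2 - 1))) *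
          ((X : Polynomial ℚ) ^ 2 - 1) = 0 := by
    simp only [keypoly]
    have e8 : (1 : ℤ).toNat = 1 := rfl
    have e9 : (2 : ℤ).toNat = 2 := rfl
    have e14 : (j - i - 2).toNat = q := hq.symm
    have e15 : (i - 4).toNat = p := hp.symm
    simp only [e1, e2, e3, e4, e5, e6, e7, e8, e9, e10, e11, e12, e13, e14, e15]
    ring
  linear_combination grouped
end
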